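/- If a capacitated, edge-weighted graph G contains a proper M-augmenting trail T (an M-alternating trail with w(T \ M) > w(T ∩ M) whose endpoints u, v satisfy the degree conditions d_u^{T △ M} ≤ c_u and d_v^{T △ M} ≤ c_v), then M △ T is a c-matching of G with strictly larger weight than M; in particular M is not a maximum-weight c-matching. -/

import Mathlib

variable {V : Type*}

/-- Degree of a vertex with respect to an edge set. -/
def degOn [DecidableEq V] (M : Finset (Sym2 V)) (v : V) : ℕ :=
  (M.filter (fun e => v ∈ e)).card

/-- Total weight of an edge set. -/
def wsum (w : Sym2 V → ℝ) (M : Finset (Sym2 V)) : ℝ := ∑ e ∈ M, w e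

/-- A `c`-matching: a set of edges of `G` with every vertex degree at most its capacity. -/
def IsCMatching [DecidableEq V] (G : SimpleGraph V) (c : V → ℕ) (M : Finset (Sym2 V)) : Prop :=
  (∀ e ∈ M, e ∈ G.edgeSet) ∧ ∀ v, degOn M v ≤ c v

/-- A maximum-weight `c`-matching. -/
def IsMaxCMatching [DecidableEq V] (G : SimpleGraph V) (w : Sym2 V → ℝ) (c : V → ℕ)
    (M : Finset (Sym2 V)) : Prop :=
  IsCMatching G c M ∧ ∀ N, IsCMatching G c N → wsum w N ≤ wsum w M

/-- A list of edges is `M`-alternating if consecutive edges alternate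
between `M` and its complement. -/
def Alternating [DecidableEq V] (M : Finset (Sym2 V)) (l : List (Sym2 V)) : Prop :=
  l.Chain' (fun e f => (e ∈ M ↔ f ∉ M))

/-- Weight (with multiplicity) of the matched edges of a list. -/
def matchedWeight [DecidableEq V] (w : Sym2 V → ℝ) (M : Finset (Sym2 V))
    (l : List (Sym2 V)) : ℝ :=
  ((l.filter (fun e => decide (e ∈ M))).map w).sum

/-- Weight (with multiplicity) of the unmatched edges of a list. -/
def unmatchedWeight [DecidableEq V] (w : Sym2 V → ℝ) (M : Finset (Sym2 V))
    (l : List (Sym2 V)) : ℝ :=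
  ((l.filter (fun e => decide (e ∉ M))).map w).sum

/-- `M`-augmenting: `w(l \ M) > w(l ∩ M)` (multiplicities counted). -/
def Augmenting [DecidableEq V] (w : Sym2 V → ℝ) (M : Finset (Sym2 V)) (l : List (Sym2 V)) : Prop :=
  matchedWeight w M l < unmatchedWeight w M l

/-- Fractional degree `Σ_{e ∈ δ(v)} x_e`. -/
def lpDeg [Fintype V] [DecidableEq V] (x : Sym2 V → ℝ) (v : V) : ℝ :=
  ∑ e : Sym2 V, if v ∈ e then x e else 0

/-- A fractional `c`-matching. -/
def IsFracCMatching [Fintype V] [DecidableEq V] (G : SimpleGraph V) (c : V → ℕ)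
    (x : Sym2 V → ℝ) : Prop :=
  (∀ e, 0 ≤ x e ∧ x e ≤ 1) ∧ (∀ e, e ∉ G.edgeSet → x e = 0) ∧ ∀ v, lpDeg x v ≤ (c v : ℝ)

/-- LP objective value `w^T x`. -/
def lpVal [Fintype V] (w x : Sym2 V → ℝ) : ℝ := ∑ e : Sym2 V, w e * x e

/-- `ν^c(G)`: maximum weight of a `c`-matching. -/
noncomputable def nuC [Fintype V] [DecidableEq V] (G : SimpleGraph V) (w : Sym2 V → ℝ)
    (c : V → ℕ) : ℝ :=
  sSup {r | ∃ M, IsCMatching G c M ∧ r = wsum w M}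

/-- `ν_f^c(G)`: optimum of the fractional `c`-matching LP. -/
noncomputable def nuF [Fintype V] [DecidableEq V] (G : SimpleGraph V) (w : Sym2 V → ℝ)
    (c : V → ℕ) : ℝ :=
  sSup {r | ∃ x, IsFracCMatching G c x ∧ r = lpVal w x}

/-- A capacitated graph is stable if `ν^c(G) = ν_f^c(G)`. -/
def Stable [Fintype V] [DecidableEq V] (G : SimpleGraph V) (w : Sym2 V → ℝ) (c : V → ℕ) : Prop :=
  nuC G w c = nuF G w c

/-- The ε-augmentation `x^{M/W}(ε)` of a walk. -/
def epsAug [DecidableEq V] {G : SimpleGraph V} {u v : V} (M : Finset (Sym2 V))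
    (p : G.Walk u v) (ε : ℝ) : Sym2 V → ℝ :=
  fun e => if e ∈ M then 1 - (p.edges.count e : ℝ) * ε else (p.edges.count e : ℝ) * ε

/-- Symmetric difference of edge sets. -/
def symmDiffE [DecidableEq V] (M T : Finset (Sym2 V)) : Finset (Sym2 V) := (M \ T) ∪ (T \ M)


private def sgn [DecidableEq V] (M : Finset (Sym2 V)) (e : Sym2 V) : ℤ :=
  if e ∈ M then -1 else 1

private def sLast [DecidableEq V] (M : Finset (Sym2 V)) : List (Sym2 V) → ℤ
  | [] => 0
  | [e] => sgn M e
  | _ :: e :: l => sLast M (e :: l)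

private def sHead [DecidableEq V] (M : Finset (Sym2 V)) : List (Sym2 V) → ℤ
  | [] => 0
  | e :: _ => sgn M e

private def delta [DecidableEq V] (M : Finset (Sym2 V)) (x : V) (l : List (Sym2 V)) : ℤ :=
  (l.countP (fun e => decide (x ∈ e ∧ e ∉ M)) : ℤ) -
    (l.countP (fun e => decide (x ∈ e ∧ e ∈ M)) : ℤ)

private lemma delta_cons [DecidableEq V] (M : Finset (Sym2 V)) (x : V) (e : Sym2 V)
    (l : List (Sym2 V)) :
    delta M x (e :: l) = delta M x l + (if x ∈ e then sgn M e else 0) := by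
  by_cases hx : x ∈ e <;> by_cases he : e ∈ M <;>
    simp [delta, sgn, List.countP_cons, hx, he] <;> ring

private lemma key [DecidableEq V] (M : Finset (Sym2 V)) {G : SimpleGraph V} :
    ∀ {u v : V} (p : G.Walk u v), Alternating M p.edges → ∀ x : V,
      delta M x p.edges ≤ (if x = u then sHead M p.edges else 0)
        + (if x = v then sLast M p.edges else 0) := by
  intro u v p
  induction p with
  | nil => intro _ x; simp [delta, sHead, sLast]
  | @cons a b vv h q IH =>
    intro halt x
    have hne : a ≠ b := h.ne
    rw [SimpleGraph.Walk.edges_cons] at halt ⊢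
    unfold Alternating List.Chain' at halt; rw [List.isChain_cons] at halt
    obtain ⟨hhd, halt'⟩ := halt
    rw [delta_cons]
    cases q with
    | nil =>
      simp only [SimpleGraph.Walk.edges_nil, delta, List.countP_nil] at *
      by_cases h1 : x = a <;> by_cases h2 : x = b <;>
        by_cases hm : s(a, b) ∈ M <;>
        simp_all [sgn, sHead, sLast, Sym2.mem_iff]
    | cons h' q' =>
      rename_i bb cc
      have hIH := IH halt' x
      rw [SimpleGraph.Walk.edges_cons] at hIH ⊢
      have hsgn : sgn M (s(b, cc)) = - sgn M s(a, b) := by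
        have := hhd s(b, cc) (by simp [SimpleGraph.Walk.edges_cons])
        by_cases hm : s(a, b) ∈ M <;> simp_all [sgn]
      have hsl : sLast M (s(a, b) :: s(b, cc) :: q'.edges)
          = sLast M (s(b, cc) :: q'.edges) := rfl
      rw [hsl]
      simp only [sHead] at hIH ⊢
      by_cases h1 : x = a <;> by_cases h2 : x = b <;>
        by_cases h3 : x = vv <;>
        simp_all [Sym2.mem_iff] <;> linarith

/-- a proper `M`-augmenting trail yields the strictly heavier `c`-matching `M △ T`;
in particular `M` is not maximum-weight. -/
theorem stmt0 [Fintype V] [DecidableEq V] (G : SimpleGraph V) (w : Sym2 V → ℝ)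
    (hw : ∀ e, 0 ≤ w e) (c : V → ℕ) (M : Finset (Sym2 V)) (hM : IsCMatching G c M)
    {u v : V} (p : G.Walk u v) (htrail : p.IsTrail)
    (halt : Alternating M p.edges) (haug : Augmenting w M p.edges)
    (hu : degOn (symmDiffE M p.edges.toFinset) u ≤ c u)
    (hv : degOn (symmDiffE M p.edges.toFinset) v ≤ c v) :
    IsCMatching G c (symmDiffE M p.edges.toFinset) ∧
      wsum w M < wsum w (symmDiffE M p.edges.toFinset) ∧
      ¬ IsMaxCMatching G w c M := by
  classical
  have hnd : p.edges.Nodup := htrail.edges_nodup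
  have hcnt1 : ∀ x : V, ((p.edges.toFinset \ M).filter (fun e => x ∈ e)).card
      = p.edges.countP (fun e => decide (x ∈ e ∧ e ∉ M)) := by
    intro x
    rw [Finset.sdiff_eq_filter, Finset.filter_filter]
    have h2 : p.edges.toFinset.filter (fun e => e ∉ M ∧ x ∈ e)
        = (p.edges.filter (fun e => decide (x ∈ e ∧ e ∉ M))).toFinset := by
      rw [List.toFinset_filter]; ext e; simp; tauto
    rw [h2, List.toFinset_card_of_nodup (hnd.filter _), List.countP_eq_length_filter]
  have hcnt2 : ∀ x : V, ((p.edges.toFinset ∩ M).filter (fun e => x ∈ e)).card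
      = p.edges.countP (fun e => decide (x ∈ e ∧ e ∈ M)) := by
    intro x
    rw [← Finset.filter_mem_eq_inter, Finset.filter_filter]
    have h2 : p.edges.toFinset.filter (fun e => e ∈ M ∧ x ∈ e)
        = (p.edges.filter (fun e => decide (x ∈ e ∧ e ∈ M))).toFinset := by
      rw [List.toFinset_filter]; ext e; simp; tauto
    rw [h2, List.toFinset_card_of_nodup (hnd.filter _), List.countP_eq_length_filter]
  have hmatch : IsCMatching G c (symmDiffE M p.edges.toFinset) := by
    constructor
    · intro e he
      rw [symmDiffE] at he
      rcases Finset.mem_union.1 he with h1 | h1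
      · exact hM.1 e (Finset.mem_sdiff.1 h1).1
      · exact p.edges_subset_edgeSet (List.mem_toFinset.1 (Finset.mem_sdiff.1 h1).1)
    · intro x
      by_cases hxu : x = u
      · subst hxu; exact hu
      by_cases hxv : x = v
      · subst hxv; exact hv
      have hkey := key M p halt x
      rw [if_neg hxu, if_neg hxv] at hkey
      have hle : p.edges.countP (fun e => decide (x ∈ e ∧ e ∉ M))
          ≤ p.edges.countP (fun e => decide (x ∈ e ∧ e ∈ M)) := by
        simp only [delta] at hkey; omega
      have e1 : degOn (symmDiffE M p.edges.toFinset) x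
          = ((M \ p.edges.toFinset).filter (fun e => x ∈ e)).card
            + ((p.edges.toFinset \ M).filter (fun e => x ∈ e)).card := by
        rw [degOn, symmDiffE, Finset.filter_union,
          Finset.card_union_of_disjoint (Finset.disjoint_filter_filter disjoint_sdiff_sdiff)]
      have e2 : degOn M x
          = ((M \ p.edges.toFinset).filter (fun e => x ∈ e)).card
            + ((p.edges.toFinset ∩ M).filter (fun e => x ∈ e)).card := by
        rw [Finset.inter_comm]
        conv_lhs => rw [degOn, ← Finset.sdiff_union_inter M p.edges.toFinset]
        rw [Finset.filter_union, Finset.card_union_of_disjoint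
          (Finset.disjoint_filter_filter (Finset.disjoint_sdiff_inter M p.edges.toFinset))]
      calc degOn (symmDiffE M p.edges.toFinset) x ≤ degOn M x := by
            rw [e1, e2]
            have := hcnt1 x; have := hcnt2 x; omega
        _ ≤ c x := hM.2 x
  have hw1 : wsum w (symmDiffE M p.edges.toFinset) = wsum w (M \ p.edges.toFinset) + wsum w (p.edges.toFinset \ M) := by
    simp only [wsum, symmDiffE]; rw [Finset.sum_union disjoint_sdiff_sdiff]
  have hw2 : wsum w M = wsum w (M \ p.edges.toFinset) + wsum w (M ∩ p.edges.toFinset) := by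
    simp only [wsum]
    rw [← Finset.sum_union (Finset.disjoint_sdiff_inter M p.edges.toFinset), Finset.sdiff_union_inter]
  have hw3 : matchedWeight w M p.edges = wsum w (M ∩ p.edges.toFinset) := by
    rw [matchedWeight, ← List.sum_toFinset _ (hnd.filter _), List.toFinset_filter, wsum]
    simp only [decide_eq_true_eq, Finset.filter_mem_eq_inter]
    rw [Finset.inter_comm]
  have hw4 : unmatchedWeight w M p.edges = wsum w (p.edges.toFinset \ M) := by
    rw [unmatchedWeight, ← List.sum_toFinset _ (hnd.filter _), List.toFinset_filter, wsum,
      Finset.sdiff_eq_filter]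
    simp only [decide_eq_true_eq]
  have haug' := haug
  rw [Augmenting] at haug'
  have hlt : wsum w M < wsum w (symmDiffE M p.edges.toFinset) := by
    rw [hw1, hw2]; rw [hw3, hw4] at haug'; linarith
  refine ⟨hmatch, hlt, ?_⟩
  rintro ⟨-, hmax⟩
  linarith [hmax _ hmatch]
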